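/- Let $f(\boldsymbol{\alpha}) = \sum_{k=1}^{k_0} 2\,\mathrm{li}_2(-e^{-2i\alpha_k}) + Q(\boldsymbol{\alpha})$, where $Q$ is a quadratic polynomial in $\alpha_1, \dots, \alpha_{k_0}$ with real coefficients and no constant or linear terms whose imaginary contribution is nonlinear (i.e., $\mathrm{Im}\, Q(\boldsymbol\alpha) = \sum_k y_k \partial_{y_k} \mathrm{Im}\, Q(\boldsymbol\alpha)$ where $\alpha_k = x_k + i y_k$). If $\boldsymbol{\alpha}^c$ is a critical point of $f$ (with each $\alpha_k^c$ in the domain of holomorphy), then $\mathrm{Im}\, f(\boldsymbol{\alpha}^c) = \sum_{k=1}^{k_0} 2 D(-e^{-2i\alpha_k^c})$, where $D(z) = \mathrm{Im}\,\mathrm{li}_2(z) + \arg(1-z)\log|z|$ is the Bloch–Wigner dilogarithm. -/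

import Mathlib

open Complex Metric MeasureTheory intervalIntegral Set

/-- The dilogarithm `li₂ z = -∫₀¹ log(1 - z t)/t dt`, holomorphic on `ℂ \ [1, ∞)`. -/
noncomputable def li2 (z : ℂ) : ℂ :=
  -∫ t in (0:ℝ)..1, Complex.log (1 - z * (t : ℂ)) / (t : ℂ)

/-- The Bloch–Wigner dilogarithm `D(z) = Im li₂(z) + arg(1-z) log|z|`. -/
noncomputable def blochWigner (z : ℂ) : ℝ :=
  (li2 z).im + (1 - z).arg * Real.log ‖z‖

lemma slit_aux {z : ℂ} (hz : ∀ r : ℝ, 1 ≤ r → z ≠ (r : ℂ)) {t : ℝ}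
    (ht0 : 0 ≤ t) (ht1 : t ≤ 1) : 1 - z * (t : ℂ) ∈ Complex.slitPlane := by
  rw [Complex.mem_slitPlane_iff]
  rcases eq_or_lt_of_le ht0 with h0 | h0
  · simp [← h0]
  by_cases him : z.im = 0
  · left
    have hzre : z = (z.re : ℂ) := by
      apply Complex.ext <;> simp [him]
    have : z.re * t < 1 := by
      by_contra hge
      push_neg at hge
      have hre1 : 1 ≤ z.re := by
        nlinarith
      exact hz z.re hre1 hzre
    rw [hzre]
    simp only [Complex.sub_re, Complex.one_re, Complex.mul_re, Complex.ofReal_re,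
      Complex.ofReal_im, mul_zero, sub_zero]
    linarith
  · right
    simp only [Complex.sub_im, Complex.one_im, Complex.mul_im, Complex.ofReal_re,
      Complex.ofReal_im, mul_zero, zero_add, zero_sub, neg_ne_zero, zero_mul]
    exact mul_ne_zero him (by positivity)

lemma li2_hasDerivAt {z₀ : ℂ} (hz : ∀ r : ℝ, 1 ≤ r → z₀ ≠ (r : ℂ)) (hz0 : z₀ ≠ 0) :
    HasDerivAt li2 (-Complex.log (1 - z₀) / z₀) z₀ := by
  -- the closed set of bad points
  set S : Set ℂ := {z | 1 ≤ z.re ∧ z.im = 0} with hS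
  have hSclosed : IsClosed S :=
    (isClosed_le continuous_const Complex.continuous_re).inter
      (isClosed_eq Complex.continuous_im continuous_const)
  have hz₀S : z₀ ∉ S := by
    intro ⟨h1, h2⟩
    exact hz z₀.re h1 (by apply Complex.ext <;> simp [h2])
  have hSne : S.Nonempty := ⟨1, by simp [hS]⟩
  have hd : 0 < Metric.infDist z₀ S :=
    (hSclosed.notMem_iff_infDist_pos hSne).mp hz₀S
  -- minimum of |1 - z₀ t| on [0,1]
  obtain ⟨t₀, ht₀, hmin'⟩ := (isCompact_Icc (a := (0:ℝ)) (b := 1)).exists_isMinOn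
    (Set.nonempty_Icc.mpr zero_le_one)
    (Continuous.continuousOn (by continuity : Continuous fun t : ℝ => ‖1 - z₀ * t‖))
  have hmin : ∀ t ∈ Set.Icc (0:ℝ) 1, ‖1 - z₀ * (t₀:ℂ)‖ ≤ ‖1 - z₀ * t‖ :=
    fun t ht => hmin' ht
  set c : ℝ := ‖1 - z₀ * (t₀ : ℂ)‖ with hc
  have hcpos : 0 < c := by
    have := Complex.slitPlane_ne_zero (slit_aux hz ht₀.1 ht₀.2)
    simpa [hc, norm_pos_iff] using this
  set ε : ℝ := min (c / 2) (Metric.infDist z₀ S) with hε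
  have hεpos : 0 < ε := lt_min (by linarith) hd
  -- points in the ball avoid the bad set
  have hball : ∀ x ∈ Metric.ball z₀ ε, ∀ r : ℝ, 1 ≤ r → x ≠ (r : ℂ) := by
    intro x hx r hr hxr
    have hxS : x ∈ S := by
      constructor <;> simp [hxr, hr]
    have h1 : Metric.infDist z₀ S ≤ dist z₀ x := Metric.infDist_le_dist_of_mem hxS
    rw [Metric.mem_ball, dist_comm] at hx
    have hlt : dist z₀ x < Metric.infDist z₀ S :=
      lt_of_lt_of_le hx (min_le_right _ _)
    linarith
  -- lower bound for the denominator on the ball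
  have hlow : ∀ x ∈ Metric.ball z₀ ε, ∀ t : ℝ, 0 ≤ t → t ≤ 1 →
      c / 2 ≤ ‖1 - x * t‖ := by
    intro x hx t ht0 ht1
    have h1 : c ≤ ‖1 - z₀ * t‖ := hmin t ⟨ht0, ht1⟩
    have h2 : ‖(x - z₀) * t‖ ≤ c / 2 := by
      rw [norm_mul]
      have : ‖x - z₀‖ < ε := by
        rw [Metric.mem_ball, dist_eq] at hx; exact hx
      have habs : ‖(t : ℂ)‖ ≤ 1 := by
        rw [Complex.norm_real, Real.norm_eq_abs]; exact abs_le.mpr ⟨by linarith, ht1⟩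
      calc ‖x - z₀‖ * ‖(t : ℂ)‖
          ≤ ε * 1 :=
            mul_le_mul (le_of_lt this) habs (norm_nonneg _) (le_of_lt hεpos)
        _ ≤ c / 2 := by rw [mul_one]; exact min_le_left _ _
    have key : 1 - x * t = (1 - z₀ * t) - (x - z₀) * t := by ring
    calc c / 2 = c - c / 2 := by ring
      _ ≤ ‖1 - z₀ * t‖ - ‖(x - z₀) * t‖ := by
          apply sub_le_sub h1 h2
      _ ≤ ‖1 - x * t‖ := by
          rw [key]; exact sub_le_iff_le_add.mpr (by
            calc ‖1 - z₀ * ↑t‖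
                = ‖(1 - z₀ * ↑t - (x - z₀) * ↑t) + (x - z₀) * ↑t‖ := by ring_nf
              _ ≤ ‖1 - z₀ * ↑t - (x - z₀) * ↑t‖ + ‖(x - z₀) * ↑t‖ :=
                  norm_add_le _ _)
  -- the parametric integral machinery
  set F : ℂ → ℝ → ℂ := fun z t => Complex.log (1 - z * (t : ℂ)) / (t : ℂ) with hF
  set F' : ℂ → ℝ → ℂ := fun z t => -(1 - z * (t : ℂ))⁻¹ with hF'
  have hmeas : ∀ z : ℂ, AEStronglyMeasurable (F z)
      (MeasureTheory.volume.restrict (Set.uIoc (0:ℝ) 1)) := by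
    intro z
    exact ((Complex.measurable_log.comp
      (measurable_const.sub (Complex.measurable_ofReal.const_mul z))).div
      Complex.measurable_ofReal).aestronglyMeasurable
  have hF_meas : ∀ᶠ x in nhds z₀, AEStronglyMeasurable (F x)
      (MeasureTheory.volume.restrict (Set.uIoc (0:ℝ) 1)) :=
    Filter.Eventually.of_forall hmeas
  -- integrability of F z₀ via a continuous extension
  set G : ℝ → ℂ := fun t => if t = 0 then -z₀ else Complex.log (1 - z₀ * (t : ℂ)) / (t : ℂ)
    with hG
  have hGcont : ContinuousOn G (Set.Icc (0:ℝ) 1) := by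
    intro t ht
    by_cases ht0 : t = 0
    · subst ht0
      rw [← continuousWithinAt_diff_self]
      have hL : HasDerivAt (fun s : ℝ => Complex.log (1 - z₀ * (s : ℂ))) (-z₀) 0 := by
        have hin : HasDerivAt (fun s : ℝ => 1 - z₀ * (s : ℂ)) (-z₀) 0 := by
          simpa using (Complex.ofRealCLM.hasDerivAt.const_mul z₀).const_sub (1:ℂ)
        simpa using hin.clog_real (by simpa using slit_aux hz le_rfl zero_le_one)
      have hslope := hasDerivAt_iff_tendsto_slope.mp hL
      have heq : ∀ s : ℝ, s ≠ 0 → slope (fun s : ℝ => Complex.log (1 - z₀ * (s : ℂ))) 0 s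
          = G s := by
        intro s hs
        simp only [slope, hG, hs, if_false, vsub_eq_sub, sub_zero]
        rw [Complex.real_smul]
        push_cast
        simp [Complex.log_one, div_eq_inv_mul]
      have htend : Filter.Tendsto G (nhdsWithin 0 {(0:ℝ)}ᶜ) (nhds (-z₀)) := by
        apply hslope.congr'
        filter_upwards [self_mem_nhdsWithin] with s hs
        exact heq s hs
      have : Filter.Tendsto G (nhdsWithin 0 (Set.Icc (0:ℝ) 1 \ {0})) (nhds (G 0)) := by
        have hG0 : G 0 = -z₀ := by simp [hG]
        rw [hG0]
        exact htend.mono_left (nhdsWithin_mono _ (fun s hs => hs.2))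
      exact this
    · have hcont : ContinuousAt (fun s : ℝ => Complex.log (1 - z₀ * (s : ℂ)) / (s : ℂ)) t := by
        apply ContinuousAt.div
        · exact ContinuousAt.clog
            ((continuous_const.sub (continuous_const.mul Complex.continuous_ofReal)).continuousAt)
            (slit_aux hz ht.1 ht.2)
        · exact Complex.continuous_ofReal.continuousAt
        · exact Complex.ofReal_ne_zero.mpr ht0
      apply ContinuousAt.continuousWithinAt
      apply hcont.congr
      filter_upwards [eventually_ne_nhds ht0] with s hs
      simp [hG, hs]
  have hF_int : IntervalIntegrable (F z₀) MeasureTheory.volume 0 1 := by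
    rw [intervalIntegrable_iff_integrableOn_Ioc_of_le zero_le_one]
    apply (hGcont.integrableOn_Icc.mono_set Set.Ioc_subset_Icc_self).congr_fun
    · intro t htt
      simp [hF, hG, ne_of_gt htt.1]
    · exact measurableSet_Ioc
  have hF'_meas : AEStronglyMeasurable (F' z₀)
      (MeasureTheory.volume.restrict (Set.uIoc (0:ℝ) 1)) :=
    (((measurable_const.sub (Complex.measurable_ofReal.const_mul z₀)).inv).neg).aestronglyMeasurable
  have h_bound : ∀ᵐ t ∂(MeasureTheory.volume), t ∈ Set.uIoc (0:ℝ) 1 →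
      ∀ x ∈ Metric.ball z₀ ε, ‖F' x t‖ ≤ (fun _ : ℝ => (c/2)⁻¹) t := by
    apply MeasureTheory.ae_of_all
    intro t ht x hx
    rw [Set.uIoc_of_le zero_le_one] at ht
    have := hlow x hx t (le_of_lt ht.1) ht.2
    simp only [hF', norm_neg, norm_inv]
    exact inv_anti₀ (by linarith) this
  have h_diff : ∀ᵐ t ∂(MeasureTheory.volume), t ∈ Set.uIoc (0:ℝ) 1 →
      ∀ x ∈ Metric.ball z₀ ε, HasDerivAt (fun z => F z t) (F' x t) x := by
    apply MeasureTheory.ae_of_all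
    intro t ht x hx
    rw [Set.uIoc_of_le zero_le_one] at ht
    have hslit := slit_aux (hball x hx) (le_of_lt ht.1) ht.2
    have htne : (t : ℂ) ≠ 0 := Complex.ofReal_ne_zero.mpr (ne_of_gt ht.1)
    have hin : HasDerivAt (fun z : ℂ => 1 - z * (t : ℂ)) (-(t:ℂ)) x := by
      simpa using ((hasDerivAt_id x).mul_const (t:ℂ)).const_sub (1:ℂ)
    have hlog := (hin.clog hslit).div_const (t : ℂ)
    have hne : 1 - x * (t:ℂ) ≠ 0 := Complex.slitPlane_ne_zero hslit
    refine hlog.congr_deriv ?_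
    show -(t:ℂ) / (1 - x * (t:ℂ)) / (t:ℂ) = -(1 - x * (t:ℂ))⁻¹
    field_simp
  have key := intervalIntegral.hasDerivAt_integral_of_dominated_loc_of_deriv_le (Metric.ball_mem_nhds z₀ hεpos)
    hF_meas hF_int hF'_meas h_bound (intervalIntegrable_const) h_diff
  -- compute the resulting integral
  have fund : ∀ t ∈ Set.uIcc (0:ℝ) 1,
      HasDerivAt (fun s : ℝ => -(Complex.log (1 - z₀ * (s : ℂ))) / z₀)
        ((1 - z₀ * (t : ℂ))⁻¹) t := by
    intro t ht
    rw [Set.uIcc_of_le zero_le_one] at ht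
    have hslit := slit_aux hz ht.1 ht.2
    have hne : 1 - z₀ * (t:ℂ) ≠ 0 := Complex.slitPlane_ne_zero hslit
    have hin : HasDerivAt (fun s : ℝ => 1 - z₀ * (s : ℂ)) (-z₀) t := by
      simpa using (Complex.ofRealCLM.hasDerivAt.const_mul z₀).const_sub (1:ℂ)
    have hlog := ((hin.clog_real (by simpa using hslit)).neg).div_const z₀
    refine hlog.congr_deriv ?_
    field_simp
  have hcont2 : ContinuousOn (fun t : ℝ => (1 - z₀ * (t : ℂ))⁻¹) (Set.uIcc (0:ℝ) 1) := by
    apply ContinuousOn.inv₀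
    · exact (continuous_const.sub (continuous_const.mul Complex.continuous_ofReal)).continuousOn
    · intro t ht
      rw [Set.uIcc_of_le zero_le_one] at ht
      exact Complex.slitPlane_ne_zero (slit_aux hz ht.1 ht.2)
  have hJ : ∫ t in (0:ℝ)..1, (1 - z₀ * (t : ℂ))⁻¹ = -Complex.log (1 - z₀) / z₀ := by
    rw [intervalIntegral.integral_eq_sub_of_hasDerivAt fund hcont2.intervalIntegrable]
    simp [Complex.log_one]
  have hval : -∫ t in (0:ℝ)..1, F' z₀ t = -Complex.log (1 - z₀) / z₀ := by
    rw [← hJ, hF']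
    simp only
    rw [intervalIntegral.integral_neg, neg_neg]
  have final : HasDerivAt li2 (-∫ t in (0:ℝ)..1, F' z₀ t) z₀ := by
    have := key.2.neg
    exact this
  rwa [hval] at final

lemma li2_comp_hasDerivAt {α : ℂ}
    (hdom : ∀ r : ℝ, 1 ≤ r → -Complex.exp (-2 * Complex.I * α) ≠ (r : ℂ)) :
    HasDerivAt (fun w : ℂ => li2 (-Complex.exp (-2 * Complex.I * w)))
      (2 * Complex.I * Complex.log (1 - -Complex.exp (-2 * Complex.I * α))) α := by
  set z : ℂ := -Complex.exp (-2 * Complex.I * α) with hz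
  have hz0 : z ≠ 0 := neg_ne_zero.mpr (Complex.exp_ne_zero _)
  have h1 : HasDerivAt (fun w : ℂ => -2 * Complex.I * w) (-2 * Complex.I) α := by
    simpa using (hasDerivAt_id α).const_mul (-2 * Complex.I)
  have h2 : HasDerivAt (fun w : ℂ => -Complex.exp (-2 * Complex.I * w))
      (-(Complex.exp (-2 * Complex.I * α) * (-2 * Complex.I))) α := h1.cexp.neg
  have houter := li2_hasDerivAt hdom hz0
  have hcomp := HasDerivAt.comp α houter h2
  refine hcomp.congr_deriv ?_
  have hexp : Complex.exp (-2 * Complex.I * α) = -z := by rw [hz]; ring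
  rw [hexp]
  field_simp

theorem stmt7 (k0 : ℕ)
    (Amat : Matrix (Fin k0) (Fin k0) ℝ) (b : Fin k0 → ℝ)
    (Q : (Fin k0 → ℂ) → ℂ)
    (hQ : ∀ α : Fin k0 → ℂ, Q α =
      ∑ j, ∑ k, (Amat j k : ℂ) * α j * α k + ∑ j, (b j : ℂ) * α j)
    (f : (Fin k0 → ℂ) → ℂ)
    (hf : ∀ α : Fin k0 → ℂ,
      f α = ∑ k, 2 * li2 (-Complex.exp (-2 * Complex.I * α k)) + Q α)
    (αc : Fin k0 → ℂ)
    (hdom : ∀ k, ∀ r : ℝ, 1 ≤ r → -Complex.exp (-2 * Complex.I * αc k) ≠ (r : ℂ))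
    (hcrit : ∀ k, deriv (fun z => f (Function.update αc k z)) (αc k) = 0) :
    (f αc).im = ∑ k, 2 * blochWigner (-Complex.exp (-2 * Complex.I * αc k)) := by
  classical
  set z : Fin k0 → ℂ := fun k => -Complex.exp (-2 * Complex.I * αc k) with hzdef
  -- closed form of the derivative of the quadratic part
  set q : Fin k0 → ℂ := fun k =>
    (∑ l, (Amat k l : ℂ) * αc l) + (∑ j, (Amat j k : ℂ) * αc j) + (b k : ℂ) with hqdef
  -- derivative of coordinate update
  have hu : ∀ k j : Fin k0, HasDerivAt (fun w : ℂ => Function.update αc k w j)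
      (if j = k then 1 else 0) (αc k) := by
    intro k j
    by_cases hjk : j = k
    · subst hjk
      simp only [Function.update_self, if_pos rfl]
      exact hasDerivAt_id' (αc j) -- fun w => w
    · simp only [Function.update_of_ne hjk, if_neg hjk]
      exact hasDerivAt_const _ _
  -- total derivative at each coordinate
  have hderiv : ∀ k, (4 : ℂ) * Complex.I * Complex.log (1 - z k) + q k = 0 := by
    intro k
    -- derivative of the li2 sum part
    have hsum : HasDerivAt (fun w : ℂ =>
        ∑ j, 2 * li2 (-Complex.exp (-2 * Complex.I * Function.update αc k w j)))
        (4 * Complex.I * Complex.log (1 - z k)) (αc k) := by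
      have : ∀ j ∈ Finset.univ, HasDerivAt (fun w : ℂ =>
          2 * li2 (-Complex.exp (-2 * Complex.I * Function.update αc k w j)))
          (if j = k then 4 * Complex.I * Complex.log (1 - z k) else 0) (αc k) := by
        intro j _
        by_cases hjk : j = k
        · subst hjk
          simp only [eq_self_iff_true, if_true]
          have hbase := (li2_comp_hasDerivAt (hdom j)).const_mul (2 : ℂ)
          have heq : (fun w : ℂ =>
              2 * li2 (-Complex.exp (-2 * Complex.I * Function.update αc j w j)))
              = fun w : ℂ => 2 * li2 (-Complex.exp (-2 * Complex.I * w)) := by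
            funext w; rw [Function.update_self]
          rw [heq]
          refine hbase.congr_deriv ?_
          rw [hzdef]
          ring
        · simp only [Function.update_of_ne hjk, if_neg hjk]
          exact hasDerivAt_const _ _
      have hs := HasDerivAt.fun_sum this
      simpa using hs
    -- derivative of the quadratic part
    have hQd : HasDerivAt (fun w : ℂ => Q (Function.update αc k w)) (q k) (αc k) := by
      have hterm : ∀ j l : Fin k0, HasDerivAt
          (fun w : ℂ => (Amat j l : ℂ) * Function.update αc k w j * Function.update αc k w l)
          ((Amat j l : ℂ) * (if j = k then 1 else 0) * αc l
            + (Amat j l : ℂ) * αc j * (if l = k then 1 else 0)) (αc k) := by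
        intro j l
        have h := ((hu k j).const_mul ((Amat j l : ℂ))).mul (hu k l)
        refine h.congr_deriv ?_
        simp [Function.update_eq_self, mul_comm, mul_assoc, mul_left_comm]
      have hlin : ∀ j : Fin k0, HasDerivAt
          (fun w : ℂ => (b j : ℂ) * Function.update αc k w j)
          ((b j : ℂ) * (if j = k then 1 else 0)) (αc k) := fun j => (hu k j).const_mul _
      have h1 : HasDerivAt (fun w : ℂ =>
          ∑ j, ∑ l, (Amat j l : ℂ) * Function.update αc k w j * Function.update αc k w l)
          (∑ j, ∑ l, ((Amat j l : ℂ) * (if j = k then 1 else 0) * αc l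
            + (Amat j l : ℂ) * αc j * (if l = k then 1 else 0))) (αc k) :=
        HasDerivAt.fun_sum fun j _ => HasDerivAt.fun_sum fun l _ => hterm j l
      have h2 : HasDerivAt (fun w : ℂ => ∑ j, (b j : ℂ) * Function.update αc k w j)
          (∑ j, (b j : ℂ) * (if j = k then 1 else 0)) (αc k) :=
        HasDerivAt.fun_sum fun j _ => hlin j
      have h3 := h1.add h2
      have heq : (fun w : ℂ => Q (Function.update αc k w))
          = fun w : ℂ => (∑ j, ∑ l, (Amat j l : ℂ) * Function.update αc k w j
              * Function.update αc k w l) + ∑ j, (b j : ℂ) * Function.update αc k w j := by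
        funext w; rw [hQ]
      rw [heq]
      refine h3.congr_deriv ?_
      symm
      rw [hqdef]
      simp only [Finset.sum_add_distrib, mul_ite, ite_mul, mul_one, mul_zero, zero_mul, one_mul]
      rw [Finset.sum_comm (f := fun j l => if j = k then (Amat j l : ℂ) * αc l else 0)]
      simp [Finset.sum_ite_eq', Finset.sum_ite_eq]
    -- assemble
    have htotal : HasDerivAt (fun w : ℂ => f (Function.update αc k w))
        (4 * Complex.I * Complex.log (1 - z k) + q k) (αc k) := by
      have heq : (fun w : ℂ => f (Function.update αc k w))
          = fun w : ℂ => (∑ j, 2 * li2 (-Complex.exp (-2 * Complex.I * Function.update αc k w j)))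
            + Q (Function.update αc k w) := by
        funext w; rw [hf]
      rw [heq]
      exact hsum.add hQd
    have := htotal.deriv
    rw [hcrit k] at this
    exact this.symm
  -- real part of q k equals 4 arg (1 - z k)
  have hqre : ∀ k, (q k).re = 4 * (1 - z k).arg := by
    intro k
    have h := hderiv k
    have : q k = -(4 * Complex.I * Complex.log (1 - z k)) := by linear_combination h
    rw [this, ← Complex.log_im]
    simp [Complex.mul_re, Complex.mul_im, Complex.I_re, Complex.I_im]
  -- imaginary part of Q αc
  have hQim : (Q αc).im = ∑ k, (αc k).im * (q k).re := by
    rw [hQ]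
    simp only [Complex.add_im, Complex.im_sum]
    have hterm : ∀ j l : Fin k0, ((Amat j l : ℂ) * αc j * αc l).im
        = Amat j l * ((αc j).re * (αc l).im + (αc j).im * (αc l).re) := by
      intro j l
      simp [Complex.mul_im, Complex.mul_re]
      ring
    have hlin : ∀ j : Fin k0, ((b j : ℂ) * αc j).im = b j * (αc j).im := by
      intro j; simp [Complex.mul_im]
    have hqre' : ∀ k, (q k).re
        = (∑ l, Amat k l * (αc l).re) + (∑ j, Amat j k * (αc j).re) + b k := by
      intro k
      rw [hqdef]
      simp [Complex.add_re, Complex.re_sum, Complex.mul_re]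
    have e1 : ∑ j, ∑ l, Amat j l * ((αc j).re * (αc l).im + (αc j).im * (αc l).re)
        = (∑ j, ∑ l, Amat j l * (αc j).re * (αc l).im)
          + ∑ j, ∑ l, Amat j l * (αc j).im * (αc l).re := by
      rw [← Finset.sum_add_distrib]
      refine Finset.sum_congr rfl fun j _ => ?_
      rw [← Finset.sum_add_distrib]
      exact Finset.sum_congr rfl fun l _ => by ring
    have e2 : (∑ j, ∑ l, Amat j l * (αc j).re * (αc l).im)
        = ∑ k, (αc k).im * ∑ j, Amat j k * (αc j).re := by
      rw [Finset.sum_comm]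
      refine Finset.sum_congr rfl fun l _ => ?_
      rw [Finset.mul_sum]
      exact Finset.sum_congr rfl fun j _ => by ring
    have e3 : (∑ j, ∑ l, Amat j l * (αc j).im * (αc l).re)
        = ∑ k, (αc k).im * ∑ l, Amat k l * (αc l).re := by
      refine Finset.sum_congr rfl fun j _ => ?_
      rw [Finset.mul_sum]
      exact Finset.sum_congr rfl fun l _ => by ring
    have e4 : (∑ j, b j * (αc j).im) = ∑ k, (αc k).im * b k :=
      Finset.sum_congr rfl fun j _ => mul_comm _ _
    simp only [hterm, hlin, hqre']
    rw [e1, e2, e3, e4]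
    simp only [mul_add, Finset.sum_add_distrib]
    ring
  -- final assembly
  have habs : ∀ k, Real.log ‖z k‖ = 2 * (αc k).im := by
    intro k
    rw [hzdef]
    simp only [norm_neg, Complex.norm_exp]
    rw [Real.log_exp]
    simp [Complex.mul_re, Complex.I_re, Complex.I_im]
  rw [hf]
  simp only [Complex.add_im, Complex.im_sum]
  rw [hQim]
  rw [← Finset.sum_add_distrib]
  refine Finset.sum_congr rfl fun k _ => ?_
  rw [hqre k]
  unfold blochWigner
  rw [habs k]
  have h2im : (2 * li2 (z k)).im = 2 * (li2 (z k)).im := by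
    simp [Complex.mul_im]
  rw [← hzdef] at *
  rw [h2im]
  ring
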